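/- Let w: ℝ → [0,∞) be integrable with ∫_ℝ w(p) dp = 1, and suppose N(p) := ∑_{n∈ℤ} w(p−n) satisfies 0 < N(p) < ∞ for every p. Let a be the 2π-periodic sawtooth function with a(q) = q on [0,2π), and set w_{m,n} := ∫_ℝ √(w(p−m) w(p−n)) dp. Then the matrix elements of the coherent-state quantisation A_a of a are: ∫_ℝ ∫₀^{2π} a(q) · ⟨e_m|p,q⟩ · conj(⟨e_n|p,q⟩) · N(p) dp dq/(2π) = π δ_{mn} + (1 − δ_{mn}) · i w_{m,n}/(m−n); moreover by the Cauchy–Schwarz inequality w_{m,n} ≤ 1 for all m, n ∈ ℤ, so A_a is a bounded self-adjoint operator. -/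

import Mathlib

open Real MeasureTheory

/-- `N(p) = ∑_{n∈ℤ} w(p−n)`. -/
noncomputable def Nw (w : ℝ → ℝ) (p : ℝ) : ℝ := ∑' n : ℤ, w (p - n)

/-- The components of the circle coherent state:
`⟨e_n|p,q⟩ = N(p)^{−1/2} √(w(p−n)) e^{−inq}`. -/
noncomputable def csC (w : ℝ → ℝ) (p q : ℝ) (n : ℤ) : ℂ :=
  ((Real.sqrt (Nw w p))⁻¹ * Real.sqrt (w (p - n)) : ℝ) *
    Complex.exp (-Complex.I * n * q)

/-- The 2π-periodic sawtooth (angle) function `a(q) = q` for `q ∈ [0, 2π)`. -/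
noncomputable def saw (q : ℝ) : ℝ := q - 2 * π * (⌊q / (2 * π)⌋ : ℝ)

/-- The overlap matrix `w_{m,n} = ∫_ℝ √(w(p−m) w(p−n)) dp`. -/
noncomputable def wOv (w : ℝ → ℝ) (m n : ℤ) : ℝ :=
  ∫ p : ℝ, Real.sqrt (w (p - m) * w (p - n))

lemma saw_eq {q : ℝ} (h0 : 0 ≤ q) (h1 : q < 2*π) : saw q = q := by
  have hπ : 0 < 2*π := by positivity
  have : ⌊q / (2*π)⌋ = 0 := by
    rw [Int.floor_eq_zero_iff]
    constructor
    · positivity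
    · rw [div_lt_one hπ]; exact h1
  simp [saw, this]

lemma int_q_exp (k : ℤ) (hk : k ≠ 0) :
    ∫ q in (0:ℝ)..(2*π), (q:ℂ) * Complex.exp (-Complex.I * k * q)
      = 2*π*Complex.I/k := by
  set c : ℂ := -Complex.I * k with hc
  have hcne : c ≠ 0 := by
    simp [hc, Complex.I_ne_zero, hk]
  have hkc : (k:ℂ) ≠ 0 := Int.cast_ne_zero.mpr hk
  set F : ℂ → ℂ := fun z => (z/c - 1/c^2) * Complex.exp (c*z) with hF
  have hderiv : ∀ z : ℂ, HasDerivAt F (z * Complex.exp (c*z)) z := by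
    intro z
    have h1 : HasDerivAt (fun z : ℂ => z/c - 1/c^2) (1/c) z := by
      have := ((hasDerivAt_id z).div_const c).sub_const (1/c^2)
      simpa [one_div] using this
    have h2 : HasDerivAt (fun z : ℂ => Complex.exp (c*z)) (Complex.exp (c*z) * c) z := by
      simpa only [mul_one] using ((hasDerivAt_id' z).const_mul c).cexp
    have := h1.mul h2
    have hkey : z * Complex.exp (c*z) = 1/c * Complex.exp (c*z) + (z/c - 1/c^2) * (Complex.exp (c*z) * c) := by
      linear_combination (Complex.exp (c*z) * c⁻¹ - z * Complex.exp (c*z)) * mul_inv_cancel₀ hcne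
    rw [hkey]
    exact this
  have hint : IntervalIntegrable (fun q : ℝ => (q:ℂ) * Complex.exp (-Complex.I * k * q)) volume 0 (2*π) := by
    apply Continuous.intervalIntegrable
    continuity
  have key := intervalIntegral.integral_eq_sub_of_hasDerivAt
    (f := fun q : ℝ => F q) (f' := fun q : ℝ => (q:ℂ) * Complex.exp (-Complex.I * k * q))
    (a := 0) (b := 2*π) ?_ hint
  · rw [key]
    have hexp : Complex.exp (c * (2*π:ℝ)) = 1 := by
      have := Complex.exp_int_mul_two_pi_mul_I (-k)
      rw [← this]
      congr 1
      push_cast [hc]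
      ring
    simp only [hF]
    push_cast at hexp ⊢
    rw [hexp, mul_zero, Complex.exp_zero]
    rw [hc]
    field_simp
    ring_nf
    rw [show (Complex.I:ℂ)^3 = -Complex.I by rw [pow_succ, Complex.I_sq]; ring]
    ring
  · intro x _
    exact (hderiv x).comp_ofReal

lemma int_saw_exp (k : ℤ) :
    ∫ q in (0:ℝ)..(2*π), (saw q:ℂ) * Complex.exp (-Complex.I * k * q)
      = if k = 0 then ((2*π^2 : ℝ) : ℂ) else 2*π*Complex.I/k := by
  have hππ : (0:ℝ) ≤ 2*π := by positivity
  have h2 : ∀ᵐ q : ℝ, q ≠ 2*π := by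
    rw [ae_iff]
    simp only [not_not, Set.setOf_eq_eq_singleton]
    exact measure_singleton _
  have hcongr : ∀ᵐ q : ℝ, q ∈ Set.uIoc (0:ℝ) (2*π) →
      (saw q:ℂ) * Complex.exp (-Complex.I * k * q) = (q:ℂ) * Complex.exp (-Complex.I * k * q) := by
    filter_upwards [h2] with q hq hmem
    rw [Set.uIoc_of_le hππ] at hmem
    rw [saw_eq hmem.1.le (lt_of_le_of_ne hmem.2 hq)]
  rw [intervalIntegral.integral_congr_ae hcongr]
  by_cases hk : k = 0
  · subst hk
    simp only [Int.cast_zero, mul_zero, zero_mul, Complex.exp_zero, mul_one, if_true]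
    rw [intervalIntegral.integral_ofReal, integral_id]
    push_cast
    ring
  · rw [if_neg hk]
    exact int_q_exp k hk

lemma inner_int (w : ℝ → ℝ) (hw0 : ∀ p, 0 ≤ w p) (hNpos : ∀ p : ℝ, 0 < Nw w p)
    (p : ℝ) (m n : ℤ) :
    (∫ q in (0:ℝ)..(2 * π),
        (saw q : ℂ) * csC w p q m * star (csC w p q n) * (Nw w p : ℝ) / (2 * π : ℝ))
      = (Real.sqrt (w (p-m) * w (p-n)) : ℂ) *
          (if m = n then (π:ℂ) else Complex.I / ((m:ℂ) - (n:ℂ))) := by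
  have hπ : (0:ℝ) < 2*π := by positivity
  have hN := hNpos p
  set r : ℝ := Real.sqrt (w (p-m) * w (p-n)) with hr
  have hstep : ∀ q : ℝ,
      (saw q : ℂ) * csC w p q m * star (csC w p q n) * (Nw w p : ℝ) / (2 * π : ℝ)
        = ((saw q:ℂ) * Complex.exp (-Complex.I * ((m - n : ℤ):ℂ) * q)) * ((r / (2*π) : ℝ):ℂ) := by
    intro q
    have hstar : star (csC w p q n)
        = (((Real.sqrt (Nw w p))⁻¹ * Real.sqrt (w (p - n)) : ℝ):ℂ) *
            Complex.exp (Complex.I * n * q) := by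
      simp only [csC, star_mul', Complex.star_def, Complex.conj_ofReal, ← Complex.exp_conj,
        map_mul, map_neg, Complex.conj_I, map_intCast]
      ring_nf
    rw [hstar]
    simp only [csC]
    have hco : ((Real.sqrt (Nw w p))⁻¹ * Real.sqrt (w (p - m)) : ℝ) *
        ((Real.sqrt (Nw w p))⁻¹ * Real.sqrt (w (p - n))) * (Nw w p) / (2*π)
        = r / (2*π) := by
      rw [hr, Real.sqrt_mul (hw0 _)]
      have h1 : Real.sqrt (Nw w p) * Real.sqrt (Nw w p) = Nw w p :=
        Real.mul_self_sqrt hN.le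
      have h2 : Real.sqrt (Nw w p) ≠ 0 := by positivity
      field_simp
      rw [Real.sq_sqrt hN.le]
      ring
    have hexp : Complex.exp (-Complex.I * m * q) * Complex.exp (Complex.I * n * q)
        = Complex.exp (-Complex.I * ((m - n : ℤ):ℂ) * q) := by
      rw [← Complex.exp_add]
      congr 1
      push_cast
      ring
    calc (saw q : ℂ) * ((((Real.sqrt (Nw w p))⁻¹ * Real.sqrt (w (p - m)) : ℝ):ℂ) *
            Complex.exp (-Complex.I * m * q)) *
          ((((Real.sqrt (Nw w p))⁻¹ * Real.sqrt (w (p - n)) : ℝ):ℂ) *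
            Complex.exp (Complex.I * n * q)) * (Nw w p : ℝ) / (2 * π : ℝ)
        = ((saw q:ℂ) * (Complex.exp (-Complex.I * m * q) * Complex.exp (Complex.I * n * q))) *
            ((((Real.sqrt (Nw w p))⁻¹ * Real.sqrt (w (p - m)) : ℝ) *
              ((Real.sqrt (Nw w p))⁻¹ * Real.sqrt (w (p - n))) * (Nw w p) / (2*π) : ℝ):ℂ) := by
          push_cast
          ring
      _ = ((saw q:ℂ) * Complex.exp (-Complex.I * ((m - n : ℤ):ℂ) * q)) * ((r / (2*π) : ℝ):ℂ) := by
          simp only [hexp, hco]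
  simp only [hstep]
  rw [intervalIntegral.integral_mul_const, int_saw_exp (m - n)]
  by_cases hmn : m = n
  · subst hmn
    rw [sub_self, if_pos rfl, if_pos rfl]
    push_cast
    have : (π:ℂ) ≠ 0 := by
      simp [Real.pi_ne_zero]
    field_simp
  · rw [if_neg (sub_ne_zero.mpr hmn), if_neg hmn]
    have hmnc : (m:ℂ) - (n:ℂ) ≠ 0 := by
      rw [sub_ne_zero]
      exact_mod_cast fun h => hmn (by exact_mod_cast h)
    have : (π:ℂ) ≠ 0 := by simp [Real.pi_ne_zero]
    push_cast
    field_simp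

/-- Matrix elements of the coherent-state quantisation of the sawtooth angle
function: `(A_a)_{mn} = π δ_{mn} + (1 − δ_{mn}) i w_{m,n}/(m−n)`; moreover
`w_{m,n} ≤ 1` by the Cauchy–Schwarz inequality, so `A_a` is bounded self-adjoint. -/
theorem circle_CS_quantisation_of_angle
    (w : ℝ → ℝ) (hw0 : ∀ p, 0 ≤ w p) (hwint : Integrable w)
    (hw1 : (∫ p : ℝ, w p) = 1)
    (hsum : ∀ p : ℝ, Summable fun n : ℤ => w (p - n))
    (hNpos : ∀ p : ℝ, 0 < Nw w p) :
    (∀ m n : ℤ,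
      (∫ p : ℝ, ∫ q in (0:ℝ)..(2 * π),
          (saw q : ℂ) * csC w p q m * star (csC w p q n) * (Nw w p : ℝ) / (2 * π : ℝ)) =
        if m = n then (π : ℂ) else Complex.I * (wOv w m n : ℝ) / ((m : ℂ) - (n : ℂ))) ∧
    (∀ m n : ℤ, wOv w m n ≤ 1) := by
  have hshift : ∀ k : ℤ, Integrable (fun p : ℝ => w (p - k)) := fun k =>
    hwint.comp_sub_right (k:ℝ)
  have hshift1 : ∀ k : ℤ, (∫ p : ℝ, w (p - k)) = 1 := fun k => by
    rw [integral_sub_right_eq_self w (k:ℝ)]; exact hw1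
  constructor
  · intro m n
    have h1 : (∫ p : ℝ, ∫ q in (0:ℝ)..(2 * π),
          (saw q : ℂ) * csC w p q m * star (csC w p q n) * (Nw w p : ℝ) / (2 * π : ℝ))
        = ∫ p : ℝ, (Real.sqrt (w (p-m) * w (p-n)) : ℂ) *
            (if m = n then (π:ℂ) else Complex.I / ((m:ℂ) - (n:ℂ))) :=
      integral_congr_ae (Filter.Eventually.of_forall fun p => inner_int w hw0 hNpos p m n)
    rw [h1, integral_mul_const]
    have h2 : (∫ p : ℝ, ((Real.sqrt (w (p-m) * w (p-n)) : ℝ):ℂ))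
        = ((wOv w m n : ℝ):ℂ) := by
      rw [wOv]
      exact integral_ofReal (𝕜 := ℂ)
    rw [h2]
    by_cases hmn : m = n
    · subst hmn
      rw [if_pos rfl, if_pos rfl]
      have : wOv w m m = 1 := by
        rw [wOv]
        have : ∀ p : ℝ, Real.sqrt (w (p - m) * w (p - m)) = w (p - m) := fun p =>
          Real.sqrt_mul_self (hw0 _)
        simp only [this]
        exact hshift1 m
      rw [this]
      simp
    · rw [if_neg hmn, if_neg hmn]
      ring
  · intro m n
    have hle : ∀ p : ℝ, Real.sqrt (w (p-m) * w (p-n)) ≤ (w (p-m) + w (p-n))/2 := by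
      intro p
      have h := Real.sqrt_mul (hw0 (p-m)) (w (p-n))
      nlinarith [sq_nonneg (Real.sqrt (w (p-m)) - Real.sqrt (w (p-n))),
        Real.sq_sqrt (hw0 (p-m)), Real.sq_sqrt (hw0 (p-n))]
    have hg : Integrable (fun p : ℝ => (w (p-m) + w (p-n))/2) :=
      ((hshift m).add (hshift n)).div_const 2
    have hf : Integrable (fun p : ℝ => Real.sqrt (w (p-m) * w (p-n))) := by
      refine hg.mono' ?_ ?_
      · exact (Real.continuous_sqrt.comp_aestronglyMeasurable
          (((hshift m).aestronglyMeasurable.mul (hshift n).aestronglyMeasurable)))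
      · filter_upwards with p
        rw [Real.norm_of_nonneg (Real.sqrt_nonneg _)]
        exact hle p
    calc wOv w m n ≤ ∫ p : ℝ, (w (p-m) + w (p-n))/2 :=
          integral_mono hf hg hle
      _ = 1 := by
          rw [integral_div, integral_add (hshift m) (hshift n), hshift1, hshift1]
          norm_num
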